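/- Let n ≥ 2 be an integer and λ, σ ∈ ℂ. For every smooth u on any open subset of ℝ^{n−1}, Σⱼ ∂²(P_σ u)/∂Yⱼ² = P_{σ−2}(Σⱼ ∂²u/∂Yⱼ²), i.e. the Euclidean Laplacian intertwines P_σ and P_{σ−2}: Δ_Y ∘ P_σ = P_{σ−2} ∘ Δ_Y. -/

import Mathlib

/-- `∂ⱼ` on functions on `ℝ^m`. -/
noncomputable def pd {m : ℕ} (j : Fin m) (u : (Fin m → ℝ) → ℂ) (Y : Fin m → ℝ) : ℂ :=
  fderiv ℝ u Y (Pi.single j 1)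

/-- The Euler vector field `E u (Y) = Σⱼ Yⱼ ∂ⱼ u (Y)`. -/
noncomputable def euler {m : ℕ} (u : (Fin m → ℝ) → ℂ) (Y : Fin m → ℝ) : ℂ :=
  ∑ j, (Y j : ℂ) * pd j u Y

/-- The Euclidean Laplacian `Δ u = Σⱼ ∂ⱼ² u`. -/
noncomputable def lap {m : ℕ} (u : (Fin m → ℝ) → ℂ) (Y : Fin m → ℝ) : ℂ :=
  ∑ j, pd j (pd j u) Y

/-- The normal operator family `P_σ u = −(E + (n−1−σ))((E − σ)u) + Δ_Y u − λ u`
acting on functions on `ℝ^{n−1}` (the real form of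
`(YD_Y − i(n−1−σ))(YD_Y + iσ) − Δ_Y − λ`). -/
noncomputable def Pop (n : ℕ) (lam σ : ℂ) (u : (Fin (n - 1) → ℝ) → ℂ)
    (Y : Fin (n - 1) → ℝ) : ℂ :=
  -(euler (fun Z => euler u Z - σ * u Z) Y
      + ((n : ℂ) - 1 - σ) * (euler u Y - σ * u Y))
    + lap u Y - lam * u Y


namespace Stmt14Aux

open Filter Topology

variable {m : ℕ} {U : Set (Fin m → ℝ)}

lemma top_le : ((⊤:ℕ∞) : WithTop ℕ∞) + 1 ≤ ((⊤:ℕ∞) : WithTop ℕ∞) := by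
  exact_mod_cast le_top

lemma diffAt {F : Type*} [NormedAddCommGroup F] [NormedSpace ℝ F]
    (hU : IsOpen U) {u : (Fin m → ℝ) → F} (hu : ContDiffOn ℝ (⊤:ℕ∞) u U)
    {Y} (hY : Y ∈ U) : DifferentiableAt ℝ u Y :=
  (hu.contDiffAt (hU.mem_nhds hY)).differentiableAt (by simp)

lemma contDiffOn_pd (hU : IsOpen U) {u : (Fin m → ℝ) → ℂ}
    (hu : ContDiffOn ℝ (⊤:ℕ∞) u U) (j : Fin m) :
    ContDiffOn ℝ (⊤:ℕ∞) (pd j u) U := by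
  have h1 : ContDiffOn ℝ (⊤:ℕ∞) (fderiv ℝ u) U := hu.fderiv_of_isOpen hU top_le
  exact (ContinuousLinearMap.apply ℝ ℂ
    (Pi.single j 1 : Fin m → ℝ)).contDiff.comp_contDiffOn h1

lemma diffAt_coord (k : Fin m) (Y : Fin m → ℝ) :
    DifferentiableAt ℝ (fun Z : Fin m → ℝ => ((Z k : ℝ) : ℂ)) Y :=
  (Complex.ofRealCLM.comp (ContinuousLinearMap.proj k :
    (Fin m → ℝ) →L[ℝ] ℝ)).differentiableAt

lemma contDiffOn_euler (hU : IsOpen U) {u : (Fin m → ℝ) → ℂ}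
    (hu : ContDiffOn ℝ (⊤:ℕ∞) u U) :
    ContDiffOn ℝ (⊤:ℕ∞) (euler u) U := by
  unfold euler
  refine ContDiffOn.sum fun j _ => ContDiffOn.mul ?_ (contDiffOn_pd hU hu j)
  exact ((Complex.ofRealCLM.comp (ContinuousLinearMap.proj j :
    (Fin m → ℝ) →L[ℝ] ℝ)).contDiff).contDiffOn

lemma contDiffOn_lap (hU : IsOpen U) {u : (Fin m → ℝ) → ℂ}
    (hu : ContDiffOn ℝ (⊤:ℕ∞) u U) :
    ContDiffOn ℝ (⊤:ℕ∞) (lap u) U := by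
  unfold lap
  exact ContDiffOn.sum fun j _ => contDiffOn_pd hU (contDiffOn_pd hU hu j) j

lemma pd_add {u v : (Fin m → ℝ) → ℂ} {Y} (hu : DifferentiableAt ℝ u Y)
    (hv : DifferentiableAt ℝ v Y) (j : Fin m) :
    pd j (fun Z => u Z + v Z) Y = pd j u Y + pd j v Y := by
  simp [pd, fderiv_fun_add hu hv]

lemma pd_sub {u v : (Fin m → ℝ) → ℂ} {Y} (hu : DifferentiableAt ℝ u Y)
    (hv : DifferentiableAt ℝ v Y) (j : Fin m) :
    pd j (fun Z => u Z - v Z) Y = pd j u Y - pd j v Y := by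
  simp [pd, fderiv_fun_sub hu hv]

lemma pd_const_mul {u : (Fin m → ℝ) → ℂ} {Y} (hu : DifferentiableAt ℝ u Y)
    (c : ℂ) (j : Fin m) :
    pd j (fun Z => c * u Z) Y = c * pd j u Y := by
  simp [pd, fderiv_const_mul hu c]

lemma pd_neg {u : (Fin m → ℝ) → ℂ} {Y} (j : Fin m) :
    pd j (fun Z => -u Z) Y = -pd j u Y := by
  simp [pd, fderiv_neg]

lemma pd_sum {ι : Type*} (s : Finset ι) (f : ι → (Fin m → ℝ) → ℂ) {Y}
    (hf : ∀ i ∈ s, DifferentiableAt ℝ (f i) Y) (j : Fin m) :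
    pd j (fun Z => ∑ i ∈ s, f i Z) Y = ∑ i ∈ s, pd j (f i) Y := by
  simp [pd, fderiv_fun_sum hf]

lemma pd_coord (j k : Fin m) (Y : Fin m → ℝ) :
    pd j (fun Z => ((Z k : ℝ) : ℂ)) Y = if k = j then 1 else 0 := by
  have h : (fun Z : Fin m → ℝ => ((Z k : ℝ) : ℂ))
      = ⇑(Complex.ofRealCLM.comp (ContinuousLinearMap.proj k :
          (Fin m → ℝ) →L[ℝ] ℝ)) := rfl
  rw [pd, h, ContinuousLinearMap.fderiv]
  simp [Pi.single_apply]
  split_ifs <;> simp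

lemma pd_coord_mul {v : (Fin m → ℝ) → ℂ} {Y} (hv : DifferentiableAt ℝ v Y)
    (j k : Fin m) :
    pd j (fun Z => ((Z k : ℝ) : ℂ) * v Z) Y
      = (if k = j then 1 else 0) * v Y + (Y k : ℂ) * pd j v Y := by
  have h := pd_coord (m := m) j k Y
  simp only [pd] at h ⊢
  rw [fderiv_fun_mul (diffAt_coord k Y) hv]
  simp only [ContinuousLinearMap.add_apply, ContinuousLinearMap.smul_apply,
    smul_eq_mul, h]
  ring

lemma pd_pd_eq (hU : IsOpen U) {u : (Fin m → ℝ) → ℂ}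
    (hu : ContDiffOn ℝ (⊤:ℕ∞) u U) {Y} (hY : Y ∈ U) (j k : Fin m) :
    pd j (pd k u) Y = fderiv ℝ (fderiv ℝ u) Y (Pi.single j 1) (Pi.single k 1) := by
  have hd : DifferentiableAt ℝ (fderiv ℝ u) Y :=
    diffAt hU (hu.fderiv_of_isOpen hU top_le) hY
  set L := ContinuousLinearMap.apply ℝ ℂ (Pi.single k 1 : Fin m → ℝ) with hL
  have h2 : HasFDerivAt (fun Z => fderiv ℝ u Z (Pi.single k 1))
      (L.comp (fderiv ℝ (fderiv ℝ u) Y)) Y := by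
    have : HasFDerivAt (⇑L ∘ fderiv ℝ u) (L.comp (fderiv ℝ (fderiv ℝ u) Y)) Y :=
      L.hasFDerivAt.comp Y hd.hasFDerivAt
    exact this
  rw [pd, show pd k u = fun Z => fderiv ℝ u Z (Pi.single k 1) from rfl, h2.fderiv]
  rfl

lemma pd_symm (hU : IsOpen U) {u : (Fin m → ℝ) → ℂ}
    (hu : ContDiffOn ℝ (⊤:ℕ∞) u U) {Y} (hY : Y ∈ U) (j k : Fin m) :
    pd j (pd k u) Y = pd k (pd j u) Y := by
  rw [pd_pd_eq hU hu hY j k, pd_pd_eq hU hu hY k j]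
  exact (hu.contDiffAt (hU.mem_nhds hY)).isSymmSndFDerivAt
    (by simp; exact WithTop.coe_le_coe.mpr le_top) _ _

lemma pd_congr {u v : (Fin m → ℝ) → ℂ} {Y} (h : u =ᶠ[𝓝 Y] v) (j : Fin m) :
    pd j u Y = pd j v Y := by
  simp only [pd]; rw [h.fderiv_eq]

lemma pd_congr_ev {u v : (Fin m → ℝ) → ℂ} {Y} (h : u =ᶠ[𝓝 Y] v) (j : Fin m) :
    pd j u =ᶠ[𝓝 Y] pd j v := by
  filter_upwards [eventually_eventually_nhds.2 h] with Z hZ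
  exact pd_congr hZ j

lemma euler_congr {u v : (Fin m → ℝ) → ℂ} {Y} (h : u =ᶠ[𝓝 Y] v) :
    euler u Y = euler v Y := by
  unfold euler
  exact Finset.sum_congr rfl fun k _ => by rw [pd_congr h k]

lemma lap_congr {u v : (Fin m → ℝ) → ℂ} {Y} (h : u =ᶠ[𝓝 Y] v) :
    lap u Y = lap v Y := by
  unfold lap
  exact Finset.sum_congr rfl fun j _ => pd_congr (pd_congr_ev h j) j

lemma euler_add {u v : (Fin m → ℝ) → ℂ} {Y} (hu : DifferentiableAt ℝ u Y)
    (hv : DifferentiableAt ℝ v Y) :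
    euler (fun Z => u Z + v Z) Y = euler u Y + euler v Y := by
  unfold euler
  rw [← Finset.sum_add_distrib]
  exact Finset.sum_congr rfl fun k _ => by rw [pd_add hu hv]; ring

lemma euler_sub {u v : (Fin m → ℝ) → ℂ} {Y} (hu : DifferentiableAt ℝ u Y)
    (hv : DifferentiableAt ℝ v Y) :
    euler (fun Z => u Z - v Z) Y = euler u Y - euler v Y := by
  unfold euler
  rw [← Finset.sum_sub_distrib]
  exact Finset.sum_congr rfl fun k _ => by rw [pd_sub hu hv]; ring

lemma euler_const_mul {u : (Fin m → ℝ) → ℂ} {Y} (hu : DifferentiableAt ℝ u Y)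
    (c : ℂ) :
    euler (fun Z => c * u Z) Y = c * euler u Y := by
  unfold euler
  rw [Finset.mul_sum]
  exact Finset.sum_congr rfl fun k _ => by rw [pd_const_mul hu c]; ring

lemma pd_euler (hU : IsOpen U) {u : (Fin m → ℝ) → ℂ}
    (hu : ContDiffOn ℝ (⊤:ℕ∞) u U) {Y} (hY : Y ∈ U) (j : Fin m) :
    pd j (euler u) Y = pd j u Y + euler (pd j u) Y := by
  have hdiff : ∀ k, DifferentiableAt ℝ (pd k u) Y :=
    fun k => diffAt hU (contDiffOn_pd hU hu k) hY
  have h1 : pd j (euler u) Y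
      = ∑ k, ((if k = j then 1 else 0) * pd k u Y + (Y k : ℂ) * pd j (pd k u) Y) := by
    rw [show euler u = fun Z => ∑ k, ((Z k : ℝ) : ℂ) * pd k u Z from rfl,
      pd_sum _ _ (fun k _ => (diffAt_coord k Y).fun_mul (hdiff k)) j]
    exact Finset.sum_congr rfl fun k _ => pd_coord_mul (hdiff k) j k
  rw [h1, Finset.sum_add_distrib]
  congr 1
  · simp [ite_mul]
  · unfold euler
    exact Finset.sum_congr rfl fun k _ => by rw [pd_symm hU hu hY j k]

lemma lap_add (hU : IsOpen U) {u v : (Fin m → ℝ) → ℂ}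
    (hu : ContDiffOn ℝ (⊤:ℕ∞) u U) (hv : ContDiffOn ℝ (⊤:ℕ∞) v U)
    {Y} (hY : Y ∈ U) :
    lap (fun Z => u Z + v Z) Y = lap u Y + lap v Y := by
  unfold lap
  rw [← Finset.sum_add_distrib]
  refine Finset.sum_congr rfl fun j _ => ?_
  have hev : pd j (fun Z => u Z + v Z) =ᶠ[𝓝 Y] fun Z => pd j u Z + pd j v Z := by
    filter_upwards [hU.mem_nhds hY] with Z hZ
    exact pd_add (diffAt hU hu hZ) (diffAt hU hv hZ) j
  rw [pd_congr hev j, pd_add (diffAt hU (contDiffOn_pd hU hu j) hY)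
    (diffAt hU (contDiffOn_pd hU hv j) hY)]

lemma lap_sub (hU : IsOpen U) {u v : (Fin m → ℝ) → ℂ}
    (hu : ContDiffOn ℝ (⊤:ℕ∞) u U) (hv : ContDiffOn ℝ (⊤:ℕ∞) v U)
    {Y} (hY : Y ∈ U) :
    lap (fun Z => u Z - v Z) Y = lap u Y - lap v Y := by
  unfold lap
  rw [← Finset.sum_sub_distrib]
  refine Finset.sum_congr rfl fun j _ => ?_
  have hev : pd j (fun Z => u Z - v Z) =ᶠ[𝓝 Y] fun Z => pd j u Z - pd j v Z := by
    filter_upwards [hU.mem_nhds hY] with Z hZ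
    exact pd_sub (diffAt hU hu hZ) (diffAt hU hv hZ) j
  rw [pd_congr hev j, pd_sub (diffAt hU (contDiffOn_pd hU hu j) hY)
    (diffAt hU (contDiffOn_pd hU hv j) hY)]

lemma lap_const_mul (hU : IsOpen U) {u : (Fin m → ℝ) → ℂ}
    (hu : ContDiffOn ℝ (⊤:ℕ∞) u U) {Y} (hY : Y ∈ U) (c : ℂ) :
    lap (fun Z => c * u Z) Y = c * lap u Y := by
  unfold lap
  rw [Finset.mul_sum]
  refine Finset.sum_congr rfl fun j _ => ?_
  have hev : pd j (fun Z => c * u Z) =ᶠ[𝓝 Y] fun Z => c * pd j u Z := by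
    filter_upwards [hU.mem_nhds hY] with Z hZ
    exact pd_const_mul (diffAt hU hu hZ) c j
  rw [pd_congr hev j, pd_const_mul (diffAt hU (contDiffOn_pd hU hu j) hY) c]

lemma lap_neg {u : (Fin m → ℝ) → ℂ} {Y} :
    lap (fun Z => -u Z) Y = -lap u Y := by
  unfold lap
  rw [← Finset.sum_neg_distrib]
  refine Finset.sum_congr rfl fun j _ => ?_
  have : pd j (fun Z => -u Z) = fun Z => -pd j u Z := funext fun Z => pd_neg j
  rw [this, pd_neg j]

lemma lap_euler (hU : IsOpen U) {u : (Fin m → ℝ) → ℂ}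
    (hu : ContDiffOn ℝ (⊤:ℕ∞) u U) {Y} (hY : Y ∈ U) :
    lap (euler u) Y = euler (lap u) Y + 2 * lap u Y := by
  have hpd : ∀ j, ContDiffOn ℝ (⊤:ℕ∞) (pd j u) U := contDiffOn_pd hU hu
  have key : ∀ j : Fin m, pd j (pd j (euler u)) Y
      = 2 * pd j (pd j u) Y + euler (pd j (pd j u)) Y := by
    intro j
    have hev : pd j (euler u) =ᶠ[𝓝 Y] fun Z => pd j u Z + euler (pd j u) Z := by
      filter_upwards [hU.mem_nhds hY] with Z hZ
      exact pd_euler hU hu hZ j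
    rw [pd_congr hev j,
      pd_add (diffAt hU (hpd j) hY) (diffAt hU (contDiffOn_euler hU (hpd j)) hY) j,
      pd_euler hU (hpd j) hY j]
    ring
  have hswap : ∑ j : Fin m, euler (pd j (pd j u)) Y = euler (lap u) Y := by
    have hL : ∀ k, pd k (lap u) Y = ∑ j : Fin m, pd k (pd j (pd j u)) Y := by
      intro k
      rw [show lap u = fun Z => ∑ j : Fin m, pd j (pd j u) Z from rfl,
        pd_sum _ _ (fun j _ => diffAt hU (contDiffOn_pd hU (hpd j) j) hY) k]
    unfold euler
    rw [Finset.sum_comm]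
    refine Finset.sum_congr rfl fun k _ => ?_
    rw [hL k, Finset.mul_sum]
  calc lap (euler u) Y = ∑ j : Fin m, (2 * pd j (pd j u) Y + euler (pd j (pd j u)) Y) :=
        Finset.sum_congr rfl fun j _ => key j
    _ = 2 * lap u Y + ∑ j : Fin m, euler (pd j (pd j u)) Y := by
        rw [Finset.sum_add_distrib, ← Finset.mul_sum]; rfl
    _ = euler (lap u) Y + 2 * lap u Y := by rw [hswap]; ring


end Stmt14Aux

open Stmt14Aux Filter Topology in
/-- the Euclidean Laplacian intertwines `P_σ` and `P_{σ−2}`: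
`Δ_Y (P_σ u) = P_{σ−2} (Δ_Y u)` for every `u` smooth on any open subset `U ⊆ ℝ^{n−1}`,
at every point of `U`. -/
theorem stmt14 (n : ℕ) (hn : 2 ≤ n) (lam σ : ℂ)
    (U : Set (Fin (n - 1) → ℝ)) (hU : IsOpen U)
    (u : (Fin (n - 1) → ℝ) → ℂ) (hu : ContDiffOn ℝ (⊤ : ℕ∞) u U) :
    ∀ Y ∈ U, lap (Pop n lam σ u) Y = Pop n lam (σ - 2) (lap u) Y := by
  intro Y hY
  have nice : ∀ (τ : ℂ) (v : (Fin (n-1) → ℝ) → ℂ), ContDiffOn ℝ (⊤:ℕ∞) v U → ∀ Z ∈ U,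
      Pop n lam τ v Z = (-1) * euler (euler v) Z + ((2*τ-(n:ℂ)+1) * euler v Z
        + ((τ*((n:ℂ)-1-τ)-lam) * v Z + lap v Z)) := by
    intro τ v hv Z hZ
    have hEv := contDiffOn_euler hU hv
    unfold Pop
    rw [euler_sub (diffAt hU hEv hZ) ((diffAt hU hv hZ).const_mul τ),
        euler_const_mul (diffAt hU hv hZ) τ]
    ring
  have hE := contDiffOn_euler hU hu
  have hEE := contDiffOn_euler hU hE
  have hL := contDiffOn_lap hU hu
  have hEL := contDiffOn_euler hU hL
  have hA : ContDiffOn ℝ (⊤:ℕ∞) (fun Z => (-1:ℂ) * euler (euler u) Z) U :=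
    contDiffOn_const.mul hEE
  have hB : ContDiffOn ℝ (⊤:ℕ∞) (fun Z => (2*σ-(n:ℂ)+1) * euler u Z) U :=
    contDiffOn_const.mul hE
  have hC : ContDiffOn ℝ (⊤:ℕ∞) (fun Z => (σ*((n:ℂ)-1-σ)-lam) * u Z) U :=
    contDiffOn_const.mul hu
  have hCD : ContDiffOn ℝ (⊤:ℕ∞)
      (fun Z => (σ*((n:ℂ)-1-σ)-lam) * u Z + lap u Z) U := hC.add hL
  have hBCD : ContDiffOn ℝ (⊤:ℕ∞)
      (fun Z => (2*σ-(n:ℂ)+1) * euler u Z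
        + ((σ*((n:ℂ)-1-σ)-lam) * u Z + lap u Z)) U := hB.add hCD
  have h_lapEu : ∀ Z ∈ U, lap (euler u) Z = euler (lap u) Z + 2 * lap u Z :=
    fun Z hZ => lap_euler hU hu hZ
  have h1 : lap (euler (euler u)) Y
      = euler (euler (lap u)) Y + 4 * euler (lap u) Y + 4 * lap u Y := by
    rw [lap_euler hU hE hY]
    have hev : lap (euler u) =ᶠ[𝓝 Y] fun Z => euler (lap u) Z + 2 * lap u Z := by
      filter_upwards [hU.mem_nhds hY] with Z hZ using h_lapEu Z hZ
    rw [euler_congr hev, euler_add (diffAt hU hEL hY) ((diffAt hU hL hY).const_mul 2),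
        euler_const_mul (diffAt hU hL hY) 2, h_lapEu Y hY]
    ring
  have hPop_ev : Pop n lam σ u =ᶠ[𝓝 Y]
      (fun Z => (-1) * euler (euler u) Z + ((2*σ-(n:ℂ)+1) * euler u Z
        + ((σ*((n:ℂ)-1-σ)-lam) * u Z + lap u Z))) := by
    filter_upwards [hU.mem_nhds hY] with Z hZ using nice σ u hu Z hZ
  rw [lap_congr hPop_ev,
      lap_add hU hA hBCD hY,
      lap_add hU hB hCD hY,
      lap_add hU hC hL hY,
      lap_const_mul hU hEE hY (-1),
      lap_const_mul hU hE hY (2*σ-(n:ℂ)+1),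
      lap_const_mul hU hu hY (σ*((n:ℂ)-1-σ)-lam),
      h1, h_lapEu Y hY,
      nice (σ-2) (lap u) hL Y hY]
  ring
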